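/- Let 𝒢 be a GRN with associated PRN ℛ, and let σ, τ be two distinct appendage nodes of 𝒢. Then σ and τ are path-equivalent in the appendage subnetwork of 𝒢 if and only if the four nodes (σ,R), (σ,P), (τ,R), (τ,P) are pairwise path-equivalent in the appendage subnetwork of ℛ. -/

import Mathlib

open List Relation

/- In the PRN on `V × Bool`, the node `(v, false)` is the mRNA node `v^R`
   and `(v, true)` is the protein node `v^P`. -/

/-- Arrow relation of the PRN associated to a GRN with arrow relation `E`:
arrows `(v,R) → (v,P)` for every `v`, and `(u,P) → (v,R)` whenever `E u v`. -/
def prnAdj {V : Type*} (E : V → V → Prop) : V × Bool → V × Bool → Prop :=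
  fun a b =>
    (a.1 = b.1 ∧ a.2 = false ∧ b.2 = true) ∨
    (E a.1 b.1 ∧ a.2 = true ∧ b.2 = false)

/-- The lift of a path `σ₁ → ⋯ → σ_m` in the GRN to the path
`(σ₁,R) → (σ₁,P) → ⋯ → (σ_m,R) → (σ_m,P)` in the PRN. -/
def liftPath {V : Type*} (l : List V) : List (V × Bool) :=
  l.flatMap fun v => [(v, false), (v, true)]

/-- A simple path: a nonempty directed path visiting each node at most once. -/
def IsSimplePath {V : Type*} (E : V → V → Prop) (l : List V) : Prop :=
  l ≠ [] ∧ l.Chain' E ∧ l.Nodup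

/-- A simple path from `a` to `b`. -/
def IsSimplePathFrom {V : Type*} (E : V → V → Prop) (a b : V) (l : List V) : Prop :=
  IsSimplePath E l ∧ l.head? = some a ∧ l.getLast? = some b

/-- A node is simple if it lies on some simple path from the input to the output. -/
def IsSimpleNode {V : Type*} (E : V → V → Prop) (ι o v : V) : Prop :=
  ∃ l, IsSimplePathFrom E ι o l ∧ v ∈ l

/-- A node is super-simple if it lies on every simple path from the input to the output. -/
def IsSuperSimpleNode {V : Type*} (E : V → V → Prop) (ι o v : V) : Prop :=
  ∀ l, IsSimplePathFrom E ι o l → v ∈ l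

/-- A node is appendage if it lies on no simple path from the input to the output. -/
def IsAppendageNode {V : Type*} (E : V → V → Prop) (ι o v : V) : Prop :=
  ¬ IsSimpleNode E ι o v

/-- An appendage path from `a` to `b`: a simple path from `a` to `b` each of whose
nodes, except possibly `a` and `b`, is an appendage node. -/
def IsAppendagePath {V : Type*} (E : V → V → Prop) (ι o a b : V) (l : List V) : Prop :=
  IsSimplePathFrom E a b l ∧ ∀ v ∈ l, v ≠ a → v ≠ b → IsAppendageNode E ι o v

/-- A directed cycle: a nonempty closed directed walk visiting each of its nodes
exactly once (a self-loop is a cycle of length one). -/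
def IsCycle {V : Type*} (E : V → V → Prop) (c : List V) : Prop :=
  c ≠ [] ∧ c.Chain' E ∧ c.Nodup ∧
    ∃ a b, c.head? = some a ∧ c.getLast? = some b ∧ E b a

/-- Arrow relation of the appendage subnetwork: the induced subgraph on appendage nodes. -/
def appendageAdj {V : Type*} (E : V → V → Prop) (ι o : V) : V → V → Prop :=
  fun a b => E a b ∧ IsAppendageNode E ι o a ∧ IsAppendageNode E ι o b

/-- Two appendage nodes are path-equivalent if each is reachable from the other by a
directed path lying entirely within the appendage subnetwork. -/
def PathEquiv {V : Type*} (E : V → V → Prop) (ι o a b : V) : Prop :=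
  Relation.ReflTransGen (appendageAdj E ι o) a b ∧
  Relation.ReflTransGen (appendageAdj E ι o) b a

/-- A node `x` is between `a` and `b` if some input-to-output simple path visits
`a`, `x`, `b` in that order. -/
def Between {V : Type*} (E : V → V → Prop) (ι o a x b : V) : Prop :=
  ∃ l, IsSimplePathFrom E ι o l ∧ [a, x, b].Sublist l

section Helpers

variable {V : Type*} {E : V → V → Prop} {ι o : V}

lemma liftPath_cons (v : V) (l : List V) :
    liftPath (v :: l) = (v, false) :: (v, true) :: liftPath l := rfl

lemma mem_liftPath {l : List V} {v : V} {b : Bool} :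
    (v, b) ∈ liftPath l ↔ v ∈ l := by
  induction l with
  | nil => simp [liftPath]
  | cons w t ih =>
    rw [liftPath_cons]
    cases b <;> simp_all [Prod.ext_iff]

lemma liftPath_head? (l : List V) :
    (liftPath l).head? = l.head?.map (fun v => (v, false)) := by
  cases l <;> rfl

lemma liftPath_getLast? : ∀ (l : List V),
    (liftPath l).getLast? = l.getLast?.map (fun v => (v, true))
  | [] => rfl
  | [v] => rfl
  | v :: w :: t => by
    rw [liftPath_cons, liftPath_cons, List.getLast?_cons_cons, List.getLast?_cons_cons,
        ← liftPath_cons, liftPath_getLast? (w :: t), List.getLast?_cons_cons]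

lemma liftPath_chain' : ∀ (l : List V), l.Chain' E → (liftPath l).Chain' (prnAdj E) := by
  intro l
  induction l with
  | nil => intro _; exact List.isChain_nil
  | cons v t ih =>
    intro h
    rw [liftPath_cons]
    cases t with
    | nil => exact List.isChain_pair.2 (Or.inl ⟨rfl, rfl, rfl⟩)
    | cons w t' =>
      unfold List.Chain' at h; rw [List.isChain_cons_cons] at h
      have ih' := ih h.2
      rw [liftPath_cons] at ih' ⊢
      unfold List.Chain'; rw [List.isChain_cons_cons, List.isChain_cons_cons]
      exact ⟨Or.inl ⟨rfl, rfl, rfl⟩, Or.inr ⟨h.1, rfl, rfl⟩, ih'⟩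

lemma liftPath_nodup {l : List V} (h : l.Nodup) : (liftPath l).Nodup := by
  induction l with
  | nil => simp [liftPath]
  | cons v t ih =>
    rw [liftPath_cons]
    simp only [List.nodup_cons] at h ⊢
    refine ⟨?_, ?_, ih h.2⟩
    · simp [mem_liftPath, h.1]
    · rw [mem_liftPath]; exact h.1

lemma map_sublist_liftPath (l : List V) :
    (l.map (fun v => (v, false))).Sublist (liftPath l) := by
  induction l with
  | nil => simp [liftPath]
  | cons v t ih =>
    rw [liftPath_cons, List.map_cons]
    exact (ih.cons _).cons₂ _

lemma nodup_of_lift {l : List V} (h : (liftPath l).Nodup) : l.Nodup := by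
  have := ((map_sublist_liftPath l).nodup h)
  exact this.of_map _

lemma chain'_of_lift : ∀ (l : List V), (liftPath l).Chain' (prnAdj E) → l.Chain' E := by
  intro l
  induction l with
  | nil => intro _; exact List.isChain_nil
  | cons v t ih =>
    intro h
    cases t with
    | nil => exact List.isChain_singleton _
    | cons w t' =>
      rw [liftPath_cons, liftPath_cons] at h; unfold List.Chain' at h; rw [List.isChain_cons_cons,
        List.isChain_cons_cons] at h
      unfold List.Chain'; rw [List.isChain_cons_cons]
      refine ⟨?_, ih (by rw [liftPath_cons]; exact h.2.2)⟩
      rcases h.2.1 with ⟨_, h2, _⟩ | ⟨hE, _, _⟩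
      · simp at h2
      · exact hE

lemma project : ∀ (n : ℕ) (L : List (V × Bool)) (a : V), L.length ≤ n →
    L.Chain' (prnAdj E) → L.head? = some (a, false) →
    (∃ w : V, L.getLast? = some (w, true)) →
    ∃ l : List V, liftPath l = L ∧ l.head? = some a := by
  intro n
  induction n with
  | zero =>
    intro L a hlen hch hhead _
    cases L with
    | nil => simp at hhead
    | cons x L' => simp at hlen
  | succ n ih =>
    intro L a hlen hch hhead hlast
    cases L with
    | nil => simp at hhead
    | cons p L' =>
      have hp : p = (a, false) := by simpa using hhead
      subst hp
      cases L' with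
      | nil =>
        obtain ⟨w, hw⟩ := hlast
        simp at hw
      | cons q L'' =>
        unfold List.Chain' at hch; rw [List.isChain_cons_cons] at hch
        have hq : q = (a, true) := by
          rcases hch.1 with ⟨h1, _, h3⟩ | ⟨_, h2, _⟩
          · exact Prod.ext h1.symm h3
          · simp at h2
        subst hq
        cases L'' with
        | nil =>
          exact ⟨[a], rfl, rfl⟩
        | cons r L₃ =>
          rw [List.isChain_cons_cons] at hch
          have hr : r = (r.1, false) ∧ E a r.1 := by
            rcases hch.2.1 with ⟨_, h2, _⟩ | ⟨hE, _, h3⟩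
            · simp at h2
            · exact ⟨Prod.ext rfl h3, hE⟩
          obtain ⟨w, hw⟩ := hlast
          have hlast'' : ∃ w : V, (r :: L₃).getLast? = some (w, true) := by
            refine ⟨w, ?_⟩
            rw [List.getLast?_cons_cons, List.getLast?_cons_cons] at hw
            exact hw
          have hlen'' : (r :: L₃).length ≤ n := by
            simp only [List.length_cons] at hlen ⊢; omega
          obtain ⟨l', hl', hh'⟩ := ih (r :: L₃) r.1 hlen'' hch.2.2
            (by rw [List.head?_cons, hr.1]) hlast''
          refine ⟨a :: l', ?_, rfl⟩
          rw [liftPath_cons, hl']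

lemma simple_node_iff {v : V} {b : Bool} :
    IsSimpleNode (prnAdj E) (ι, false) (o, true) (v, b) ↔ IsSimpleNode E ι o v := by
  constructor
  · rintro ⟨L, ⟨⟨hLne, hch, hnd⟩, hh, hl⟩, hmem⟩
    obtain ⟨l, hL, hhead⟩ := project L.length L ι le_rfl hch hh ⟨o, hl⟩
    subst hL
    have hlast : l.getLast? = some o := by
      rw [liftPath_getLast?] at hl
      cases hgl : l.getLast? with
      | none => rw [hgl] at hl; simp at hl
      | some x =>
        rw [hgl] at hl
        simp only [Option.map_some] at hl
        have : x = o := congrArg Prod.fst (Option.some.inj hl)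
        rw [this]
    refine ⟨l, ⟨⟨?_, chain'_of_lift l hch, nodup_of_lift hnd⟩, hhead, hlast⟩,
      mem_liftPath.1 hmem⟩
    intro h; subst h; simp at hhead
  · rintro ⟨l, ⟨⟨hlne, hch, hnd⟩, hh, hl⟩, hmem⟩
    refine ⟨liftPath l, ⟨⟨?_, liftPath_chain' l hch, liftPath_nodup hnd⟩, ?_, ?_⟩,
      mem_liftPath.2 hmem⟩
    · cases l with
      | nil => exact absurd rfl hlne
      | cons w t => rw [liftPath_cons]; simp
    · rw [liftPath_head?, hh]; rfl
    · rw [liftPath_getLast?, hl]; rfl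

lemma appendage_iff {v : V} {b : Bool} :
    IsAppendageNode (prnAdj E) (ι, false) (o, true) (v, b) ↔ IsAppendageNode E ι o v :=
  not_congr simple_node_iff

lemma reach_proj {x y : V × Bool}
    (h : Relation.ReflTransGen (appendageAdj (prnAdj E) (ι, false) (o, true)) x y) :
    Relation.ReflTransGen (appendageAdj E ι o) x.1 y.1 := by
  induction h with
  | refl => exact .refl
  | tail _ hstep ih =>
    obtain ⟨hadj, hA, hB⟩ := hstep
    rcases hadj with ⟨heq, _, _⟩ | ⟨hE, _, _⟩
    · exact heq ▸ ih
    · exact ih.tail ⟨hE, appendage_iff.1 hA, appendage_iff.1 hB⟩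

lemma reach_lift_ff {a b : V} (h : Relation.ReflTransGen (appendageAdj E ι o) a b) :
    Relation.ReflTransGen (appendageAdj (prnAdj E) (ι, false) (o, true))
      (a, false) (b, false) := by
  induction h using Relation.ReflTransGen.head_induction_on with
  | refl => exact .refl
  | @head a c hstep _ ih =>
    obtain ⟨hE, ha, hc⟩ := hstep
    have e1 : appendageAdj (prnAdj E) (ι, false) (o, true) (a, false) (a, true) :=
      ⟨Or.inl ⟨rfl, rfl, rfl⟩, appendage_iff.2 ha, appendage_iff.2 ha⟩
    have e2 : appendageAdj (prnAdj E) (ι, false) (o, true) (a, true) (c, false) :=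
      ⟨Or.inr ⟨hE, rfl, rfl⟩, appendage_iff.2 ha, appendage_iff.2 hc⟩
    exact .head e1 (.head e2 ih)

end Helpers

/-- Distinct appendage nodes `σ, τ` of the GRN are path-equivalent in
the appendage subnetwork of the GRN if and only if the four nodes
`(σ,R), (σ,P), (τ,R), (τ,P)` are pairwise path-equivalent in the appendage
subnetwork of the PRN. -/
theorem stmt_12 {V : Type*} [Fintype V] (E : V → V → Prop) (ι o σ τ : V)
    (hne : σ ≠ τ)
    (hσ : IsAppendageNode E ι o σ) (hτ : IsAppendageNode E ι o τ) :
    PathEquiv E ι o σ τ ↔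
      (∀ x ∈ ({(σ, false), (σ, true), (τ, false), (τ, true)} : Set (V × Bool)),
       ∀ y ∈ ({(σ, false), (σ, true), (τ, false), (τ, true)} : Set (V × Bool)),
        PathEquiv (prnAdj E) (ι, false) (o, true) x y) := by
  constructor
  · rintro ⟨hστ, hτσ⟩
    have r01 : Relation.ReflTransGen (appendageAdj (prnAdj E) (ι, false) (o, true))
        (σ, false) (σ, true) :=
      .single ⟨Or.inl ⟨rfl, rfl, rfl⟩, appendage_iff.2 hσ, appendage_iff.2 hσ⟩
    have r23 : Relation.ReflTransGen (appendageAdj (prnAdj E) (ι, false) (o, true))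
        (τ, false) (τ, true) :=
      .single ⟨Or.inl ⟨rfl, rfl, rfl⟩, appendage_iff.2 hτ, appendage_iff.2 hτ⟩
    have r12 : Relation.ReflTransGen (appendageAdj (prnAdj E) (ι, false) (o, true))
        (σ, true) (τ, false) := by
      rcases hστ.cases_head with h | ⟨c, hstep, hrest⟩
      · exact absurd h hne
      · exact .head ⟨Or.inr ⟨hstep.1, rfl, rfl⟩, appendage_iff.2 hstep.2.1,
          appendage_iff.2 hstep.2.2⟩ (reach_lift_ff hrest)
    have r30 : Relation.ReflTransGen (appendageAdj (prnAdj E) (ι, false) (o, true))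
        (τ, true) (σ, false) := by
      rcases hτσ.cases_head with h | ⟨c, hstep, hrest⟩
      · exact absurd h hne.symm
      · exact .head ⟨Or.inr ⟨hstep.1, rfl, rfl⟩, appendage_iff.2 hstep.2.1,
          appendage_iff.2 hstep.2.2⟩ (reach_lift_ff hrest)
    have key : ∀ x ∈ ({(σ, false), (σ, true), (τ, false), (τ, true)} : Set (V × Bool)),
        Relation.ReflTransGen (appendageAdj (prnAdj E) (ι, false) (o, true)) (σ, false) x ∧
        Relation.ReflTransGen (appendageAdj (prnAdj E) (ι, false) (o, true)) x (σ, false) := by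
      intro x hx
      simp only [Set.mem_insert_iff, Set.mem_singleton_iff] at hx
      rcases hx with rfl | rfl | rfl | rfl
      · exact ⟨.refl, .refl⟩
      · exact ⟨r01, (r12.trans r23).trans r30⟩
      · exact ⟨r01.trans r12, r23.trans r30⟩
      · exact ⟨(r01.trans r12).trans r23, r30⟩
    intro x hx y hy
    exact ⟨((key x hx).2).trans ((key y hy).1), ((key y hy).2).trans ((key x hx).1)⟩
  · intro H
    have h1 := H (σ, false) (by simp) (τ, false) (by simp)
    exact ⟨reach_proj h1.1, reach_proj h1.2⟩
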